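/- arXiv:math/0405561 — 5 statements merged into one kernel-verified Lean document; each statement's English description precedes it below -/
import Mathlib

section
/- For sequences (a_n), (A_n) of real numbers with A_n = ∑_{d | n} a_d, and for real x with 0 < |x| < π (under suitable absolute convergence hypotheses, e.g. a_n = 0 for all but finitely many n), ∏_{n=1}^∞ ((n/x) · sin(x/n))^{a_n} = ∏_{n=1}^∞ (1 - x²/(n²π²))^{A_n}. -/
open Real


open Real Filter Function

lemma neg_log_one_sub_le {u : ℝ} (h0 : 0 ≤ u) (h2 : u ≤ 1/2) : -Real.log (1 - u) ≤ 2*u := by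
  have h1 : 0 < 1 - u := by linarith
  have h3 := Real.log_le_sub_one_of_pos (inv_pos.2 h1)
  rw [Real.log_inv] at h3
  have h4 : (1-u)⁻¹ * (1-u) = 1 := inv_mul_cancel₀ h1.ne'
  nlinarith [sq_nonneg u]

lemma summable_log_one_sub (u : ℕ → ℝ) (h0 : ∀ k, 0 ≤ u k) (h1 : ∀ k, u k < 1)
    (hs : Summable u) : Summable fun k => Real.log (1 - u k) := by
  apply Summable.of_norm_bounded_eventually (g := fun k => 2 * u k) (hs.mul_left 2)
  rw [Nat.cofinite_eq_atTop]
  have h2 : ∀ᶠ k in atTop, u k < 1/2 :=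
    hs.tendsto_atTop_zero.eventually (gt_mem_nhds (by norm_num : (0:ℝ) < 1/2))
  filter_upwards [h2] with k hk
  rw [Real.norm_eq_abs, abs_of_nonpos (Real.log_nonpos (by linarith [h0 k]) (by linarith [h0 k]))]
  exact neg_log_one_sub_le (h0 k) hk.le

lemma sin_div_self_pos {y : ℝ} (hy0 : y ≠ 0) (hy : |y| < π) : 0 < Real.sin y / y := by
  rw [abs_lt] at hy
  rcases lt_or_gt_of_ne hy0 with h | h
  · have : Real.sin (-y) / (-y) = Real.sin y / y := by rw [Real.sin_neg, neg_div_neg_eq]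
    rw [← this]
    exact div_pos (Real.sin_pos_of_pos_of_lt_pi (by linarith) (by linarith)) (by linarith)
  · exact div_pos (Real.sin_pos_of_pos_of_lt_pi h hy.2) h

lemma hasSum_log_sin_div {y : ℝ} (hy0 : y ≠ 0) (hy : |y| < π) :
    HasSum (fun k : ℕ => Real.log (1 - y^2 / (((k:ℝ)+1)^2 * π^2)))
      (Real.log (Real.sin y / y)) := by
  have hπ := Real.pi_pos
  set u : ℕ → ℝ := fun k => y^2 / (((k:ℝ)+1)^2 * π^2) with hu
  have hy2 : y^2 < π^2 := by
    rw [← sq_abs]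
    exact pow_lt_pow_left₀ hy (abs_nonneg y) two_ne_zero
  have h0 : ∀ k, 0 ≤ u k := fun k => by positivity
  have h1 : ∀ k, u k < 1 := by
    intro k
    rw [hu, div_lt_one (by positivity)]
    have hk : (1:ℝ) ≤ ((k:ℝ)+1)^2 := by nlinarith [Nat.cast_nonneg (α := ℝ) k]
    nlinarith [mul_nonneg (sub_nonneg.2 hk) (sq_nonneg π)]
  have hs : Summable u := by
    have base : Summable (fun k : ℕ => 1/((k:ℝ)+1)^2) := by
      have := summable_one_div_nat_pow (p := 2) |>.mpr one_lt_two
      exact (summable_nat_add_iff 1).mpr this |>.congr fun k => by push_cast; ring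
    exact (base.mul_left (y^2/π^2)).congr fun k => by
      rw [hu]; field_simp
  have hsum := summable_log_one_sub u h0 h1 hs
  have heuler := Real.tendsto_euler_sin_prod (y/π)
  have hyπ : π * (y/π) = y := by field_simp
  have hterm : ∀ j : ℕ, 1 - (y/π)^2/((j:ℝ)+1)^2 = 1 - u j := by
    intro j; rw [hu]; rw [div_pow]; field_simp
  have heuler2 : Tendsto (fun n : ℕ => ∏ j ∈ Finset.range n, (1 - u j)) atTop
      (nhds (Real.sin y / y)) := by
    have h2 := heuler.const_mul y⁻¹
    rw [hyπ] at h2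
    simp only [Real.sin] at h2
    have : (fun n : ℕ => y⁻¹ * (y * ∏ j ∈ Finset.range n, ((1:ℝ) - (y/π)^2/((j:ℝ)+1)^2)))
        = fun n : ℕ => ∏ j ∈ Finset.range n, (1 - u j) := by
      funext n
      rw [inv_mul_cancel_left₀ hy0]
      exact Finset.prod_congr rfl fun j _ => hterm j
    rw [this] at h2
    rwa [inv_mul_eq_div] at h2
  have h3 := hsum.hasSum.tendsto_sum_nat
  have h4 := (Real.continuous_exp.tendsto _).comp h3
  have heq : (fun n : ℕ => Real.exp (∑ j ∈ Finset.range n, Real.log (1 - u j)))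
      = fun n : ℕ => ∏ j ∈ Finset.range n, (1 - u j) := by
    funext n
    rw [Real.exp_sum]
    exact Finset.prod_congr rfl fun j _ => Real.exp_log (by linarith [h1 j])
  rw [Function.comp_def] at h4
  rw [heq] at h4
  have hkey : Real.exp (∑' k, Real.log (1 - u k)) = Real.sin y / y :=
    tendsto_nhds_unique h4 heuler2
  have : Real.log (Real.sin y / y) = ∑' k, Real.log (1 - u k) := by
    rw [← hkey, Real.log_exp]
  rw [this]
  exact hsum.hasSum

lemma sin_div_rewrite (x : ℝ) (m : ℝ) : Real.sin (x/m) / (x/m) = (m/x) * Real.sin (x/m) := by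
  rw [div_eq_mul_inv, inv_div, mul_comm]

lemma hasSum_log_g {x : ℝ} (hx0 : x ≠ 0) (hx : |x| < π) {m : ℕ} (hm : 1 ≤ m) :
    HasSum (fun k : ℕ => Real.log (1 - x^2 / ((m:ℝ)^2 * ((k:ℝ)+1)^2 * π^2)))
      (Real.log (((m:ℝ)/x) * Real.sin (x/(m:ℝ)))) := by
  have hm0 : (0:ℝ) < m := by exact_mod_cast hm
  have hy0 : x/(m:ℝ) ≠ 0 := div_ne_zero hx0 hm0.ne'
  have hy : |x/(m:ℝ)| < π := by
    rw [abs_div, abs_of_pos hm0]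
    calc |x|/(m:ℝ) ≤ |x| := div_le_self (abs_nonneg x) (by exact_mod_cast hm)
    _ < π := hx
  have h := hasSum_log_sin_div hy0 hy
  rw [sin_div_rewrite] at h
  have hfe : (fun k : ℕ => Real.log (1 - (x/(m:ℝ))^2 / (((k:ℝ)+1)^2 * π^2)))
      = fun k : ℕ => Real.log (1 - x^2 / ((m:ℝ)^2 * ((k:ℝ)+1)^2 * π^2)) := by
    funext k
    rw [div_pow]
    congr 1
    rw [div_div]
    congr 1
    ring
  rwa [hfe] at h

lemma B_pos {x : ℝ} (hx0 : x ≠ 0) (hx : |x| < π) {m : ℕ} (hm : 1 ≤ m) :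
    0 < ((m:ℝ)/x) * Real.sin (x/(m:ℝ)) := by
  have hm0 : (0:ℝ) < m := by exact_mod_cast hm
  have hy0 : x/(m:ℝ) ≠ 0 := div_ne_zero hx0 hm0.ne'
  have hy : |x/(m:ℝ)| < π := by
    rw [abs_div, abs_of_pos hm0]
    calc |x|/(m:ℝ) ≤ |x| := div_le_self (abs_nonneg x) (by exact_mod_cast hm)
    _ < π := hx
  have := sin_div_self_pos hy0 hy
  rwa [sin_div_rewrite] at this


/-- Pólya–Szegő Exercise 67: for a finitely supported integer sequence `a` with divisor
sums `A n = ∑_{d ∣ n} a d`, and `0 < |x| < π`,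
`∏ ((n/x) sin(x/n))^{a_n} = ∏ (1 - x²/(n²π²))^{A_n}`. -/
theorem polya_szego_67 (a A : ℕ → ℤ)
    (hfin : (Function.support a).Finite)
    (hA : ∀ n, 1 ≤ n → A n = ∑ d ∈ n.divisors, a d)
    (x : ℝ) (hx0 : 0 < |x|) (hxpi : |x| < π) :
    ∏' n : ℕ, ((((n : ℝ) + 1) / x) * Real.sin (x / ((n : ℝ) + 1))) ^ (a (n + 1))
      = ∏' n : ℕ, (1 - x ^ 2 / (((n : ℝ) + 1) ^ 2 * π ^ 2)) ^ (A (n + 1)) := by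
  classical
  have hπ := Real.pi_pos
  have hx0' : x ≠ 0 := by
    intro h; rw [h] at hx0; simp at hx0
  have hx2 : x^2 < π^2 := by
    rw [← sq_abs]
    exact pow_lt_pow_left₀ hxpi (abs_nonneg x) two_ne_zero
  set B : ℕ → ℝ := fun m => ((m:ℝ)/x) * Real.sin (x/(m:ℝ)) with hB
  set G : ℕ → ℝ := fun j => 1 - x^2 / (((j:ℝ)+1)^2 * π^2) with hG
  have hGpos : ∀ j : ℕ, 0 < G j := by
    intro j
    rw [hG]
    have hk : (1:ℝ) ≤ ((j:ℝ)+1)^2 := by nlinarith [Nat.cast_nonneg (α := ℝ) j]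
    have : x^2 / (((j:ℝ)+1)^2 * π^2) < 1 := by
      rw [div_lt_one (by positivity)]
      nlinarith [mul_nonneg (sub_nonneg.2 hk) (sq_nonneg π)]
    simp only [sub_pos]
    exact this
  set s : Finset ℕ := hfin.toFinset.erase 0 with hs
  have hmem : ∀ n : ℕ, n ∈ s ↔ (n ≠ 0 ∧ a n ≠ 0) := by
    intro n
    simp [hs, Finset.mem_erase, hfin.mem_toFinset, Function.mem_support]
  set F : ℕ → ℕ → ℝ := fun n j => if n ∣ (j+1) then Real.log (G j) * (a n : ℝ) else 0 with hF
  -- each F n has the right sum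
  have hFha : ∀ n ∈ s, HasSum (F n) (Real.log (B n) * (a n:ℝ)) := by
    intro n hn
    have hn1 : 1 ≤ n := Nat.one_le_iff_ne_zero.mpr ((hmem n).mp hn).1
    set i : ℕ → ℕ := fun k => n*(k+1) - 1 with hi
    have hi1 : ∀ k, 1 ≤ n*(k+1) := fun k => Nat.one_le_iff_ne_zero.mpr
      (Nat.mul_ne_zero (by omega) (by omega))
    have hinj : Function.Injective i := by
      have : StrictMono i := by
        apply strictMono_nat_of_lt_succ
        intro k
        have h1 := hi1 k
        have h2 : n*(k+1) < n*(k+1+1) := by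
          calc n*(k+1) < n*(k+1) + n := by omega
          _ = n*(k+1+1) := by ring
        simp only [hi]
        omega
      exact this.injective
    have hrange : Function.support (F n) ⊆ Set.range i := by
      intro j hj
      rw [Function.mem_support, hF] at hj
      simp only at hj
      by_cases hd : n ∣ (j+1)
      · obtain ⟨c, hc⟩ := hd
        have hc0 : c ≠ 0 := by rintro rfl; simp at hc
        refine ⟨c - 1, ?_⟩
        simp only [hi]
        rw [show c - 1 + 1 = c by omega]
        omega
      · simp [hd] at hj
    have hcomp : (F n) ∘ i = fun k : ℕ =>
        Real.log (1 - x^2 / ((n:ℝ)^2 * ((k:ℝ)+1)^2 * π^2)) * (a n:ℝ) := by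
      funext k
      have h1 := hi1 k
      have hieq : i k + 1 = n*(k+1) := by simp only [hi]; omega
      have hdvd : n ∣ (i k + 1) := by rw [hieq]; exact Dvd.intro _ rfl
      have hcast : ((i k : ℕ):ℝ) + 1 = (n:ℝ) * ((k:ℝ)+1) := by
        have : ((i k + 1 : ℕ):ℝ) = ((n*(k+1) : ℕ):ℝ) := by rw [hieq]
        push_cast at this
        linarith
      simp only [Function.comp_apply, hF, hdvd, if_true]
      congr 2
      rw [hG]
      simp only
      rw [hcast]
      congr 1
      ring
    have hgsum := (hasSum_log_g hx0' hxpi hn1).mul_right (a n : ℝ)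
    rw [← hcomp] at hgsum
    exact (hinj.hasSum_iff (by
      intro j hj
      by_contra hne
      exact hj (hrange (Function.mem_support.mpr hne)))).mp hgsum
  -- sum over s
  have hT : HasSum (fun j => ∑ n ∈ s, F n j) (∑ n ∈ s, Real.log (B n) * (a n:ℝ)) :=
    hasSum_sum hFha
  -- pointwise identification with A
  have hFA : ∀ j : ℕ, ∑ n ∈ s, F n j = Real.log (G j) * (A (j+1) : ℝ) := by
    intro j
    have h1 : ∑ n ∈ s, F n j = Real.log (G j) * ∑ n ∈ s, (if n ∣ (j+1) then (a n:ℝ) else 0) := by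
      rw [Finset.mul_sum]
      refine Finset.sum_congr rfl fun n _ => ?_
      simp only [hF]
      split <;> simp
    rw [h1]
    congr 1
    have h2 : ∑ n ∈ s, (if n ∣ (j+1) then (a n:ℝ) else 0)
        = ∑ n ∈ s.filter (· ∣ (j+1)), (a n:ℝ) := (Finset.sum_filter _ _).symm
    have h3 : s.filter (· ∣ (j+1)) = (j+1).divisors.filter (fun d => a d ≠ 0) := by
      ext n
      simp only [Finset.mem_filter, hmem, Nat.mem_divisors]
      constructor
      · rintro ⟨⟨hn0, ha⟩, hd⟩
        exact ⟨⟨hd, Nat.succ_ne_zero j⟩, ha⟩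
      · rintro ⟨⟨hd, -⟩, ha⟩
        refine ⟨⟨?_, ha⟩, hd⟩
        rintro rfl
        rw [zero_dvd_iff] at hd
        omega
    have h4 : ∑ n ∈ (j+1).divisors.filter (fun d => a d ≠ 0), a n
        = ∑ n ∈ (j+1).divisors, a n := Finset.sum_filter_ne_zero _
    rw [h2, h3]
    rw [show ∑ n ∈ (j+1).divisors.filter (fun d => a d ≠ 0), (a n:ℝ)
        = ((∑ n ∈ (j+1).divisors.filter (fun d => a d ≠ 0), a n : ℤ):ℝ) by push_cast; rfl]
    rw [h4, ← hA (j+1) (by omega)]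
  have hT2 : HasSum (fun j => Real.log (G j) * (A (j+1) : ℝ))
      (∑ n ∈ s, Real.log (B n) * (a n:ℝ)) := by
    have := hT
    rwa [show (fun j => ∑ n ∈ s, F n j) = fun j => Real.log (G j) * (A (j+1) : ℝ) from
      funext hFA] at this
  -- RHS
  have hRHS : ∏' n : ℕ, (1 - x ^ 2 / (((n : ℝ) + 1) ^ 2 * π ^ 2)) ^ (A (n + 1))
      = Real.exp (∑ n ∈ s, Real.log (B n) * (a n:ℝ)) := by
    have hzx : ∀ j : ℕ, (G j) ^ (A (j+1)) = Real.exp (Real.log (G j) * (A (j+1):ℝ)) := by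
      intro j
      rw [← Real.rpow_intCast (G j) (A (j+1)), Real.rpow_def_of_pos (hGpos j)]
    have hp := hT2.rexp
    have : ∏' j : ℕ, Real.exp (Real.log (G j) * (A (j+1):ℝ))
        = Real.exp (∑ n ∈ s, Real.log (B n) * (a n:ℝ)) := by
      rw [← hp.tprod_eq]
      rfl
    rw [← this]
    show (∏' j : ℕ, G j ^ (A (j+1))) = _
    exact tprod_congr fun j => hzx j
  -- LHS
  set s₀ : Finset ℕ := s.image (· - 1) with hs₀
  have hLHS : ∏' n : ℕ, ((((n : ℝ) + 1) / x) * Real.sin (x / ((n : ℝ) + 1))) ^ (a (n + 1))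
      = Real.exp (∑ n ∈ s, Real.log (B n) * (a n:ℝ)) := by
    have hBfun : (fun n : ℕ => ((((n : ℝ) + 1) / x) * Real.sin (x / ((n : ℝ) + 1))) ^ (a (n + 1)))
        = fun n : ℕ => B (n+1) ^ (a (n+1)) := by
      funext n
      rw [hB]
      push_cast
      rfl
    rw [hBfun]
    rw [tprod_eq_prod (s := s₀) (f := fun n : ℕ => B (n+1) ^ (a (n+1))) ?_]
    · have himg : ∏ n ∈ s₀, B (n+1) ^ (a (n+1)) = ∏ m ∈ s, B ((m-1)+1) ^ (a ((m-1)+1)) := by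
        rw [hs₀]
        apply Finset.prod_image
        intro m hm m' hm' h
        have h1 : 1 ≤ m := Nat.one_le_iff_ne_zero.mpr ((hmem m).mp hm).1
        have h2 : 1 ≤ m' := Nat.one_le_iff_ne_zero.mpr ((hmem m').mp hm').1
        simp only at h
        omega
      rw [himg]
      have hstep : ∀ m ∈ s, B ((m-1)+1) ^ (a ((m-1)+1)) = Real.exp (Real.log (B m) * (a m:ℝ)) := by
        intro m hm
        have h1 : 1 ≤ m := Nat.one_le_iff_ne_zero.mpr ((hmem m).mp hm).1
        rw [Nat.sub_add_cancel h1]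
        rw [← Real.rpow_intCast (B m) (a m), Real.rpow_def_of_pos (B_pos hx0' hxpi h1)]
      rw [Finset.prod_congr rfl hstep, ← Real.exp_sum]
    · intro n hn
      have hz : a (n+1) = 0 := by
        by_contra hne
        have : n+1 ∈ s := (hmem (n+1)).mpr ⟨Nat.succ_ne_zero n, hne⟩
        exact hn (Finset.mem_image.mpr ⟨n+1, this, rfl⟩)
      show B (n+1) ^ (a (n+1)) = 1
      rw [hz, zpow_zero]
  rw [hLHS, hRHS]
end

section
/- For sequences (a_n), (B_n) with B_n = ∑_{d | n} (-1)^{d-1} a_{n/d}, with (a_n) finitely supported and integer-valued, and real x with 0 < |x| < 2π, x/(2n) not a multiple of π, one has ∏_{n=1}^∞ ((x/(2n)) · cot(x/(2n)))^{a_n} = ∏_{n=1}^∞ (1 - x²/(n²π²))^{B_n}. -/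
open Real Filter Topology Finset

set_option maxHeartbeats 1000000

private lemma PS68.hasProd_zpow {ι : Type*} {g : ι → ℝ} {L : ℝ} (h : HasProd g L) (z : ℤ)
    (hL : L ≠ 0 ∨ 0 ≤ z) : HasProd (fun k => g k ^ z) (L ^ z) := by
  have hc : ContinuousAt (fun y : ℝ => y ^ z) L := continuousAt_zpow₀ L z hL
  have h2 := hc.tendsto.comp h
  simpa [HasProd, Function.comp_def, Finset.prod_zpow] using h2

private lemma PS68.hasProd_finset {ι : Type*} (s : Finset ι) (F : ι → ℕ → ℝ) (L : ι → ℝ)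
    (h : ∀ n ∈ s, HasProd (F n) (L n)) :
    HasProd (fun m => ∏ n ∈ s, F n m) (∏ n ∈ s, L n) := by
  classical
  induction s using Finset.cons_induction with
  | empty => simpa using hasProd_one
  | cons i s hi ih =>
    simp only [Finset.prod_cons]
    exact (h i (Finset.mem_cons_self _ _)).mul
      (ih fun n hn => h n (Finset.mem_cons_of_mem hn))

private lemma PS68.zpow_sum {ι : Type*} (c : ℝ) (s : Finset ι) (k : ι → ℤ)
    (hc : c ≠ 0 ∨ ∀ n ∈ s, k n = 0) :
    ∏ n ∈ s, c ^ (k n) = c ^ (∑ n ∈ s, k n) := by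
  classical
  rcases hc with hc | h0
  · induction s using Finset.cons_induction with
    | empty => simp
    | cons i s hi ih => rw [Finset.prod_cons, Finset.sum_cons, zpow_add₀ hc, ih]
  · rw [Finset.sum_eq_zero h0, zpow_zero]
    exact Finset.prod_eq_one fun n hn => by rw [h0 n hn, zpow_zero]

private lemma PS68.tprod_eq_zero {g : ℕ → ℝ} (i : ℕ) (hi : g i = 0) : ∏' m, g m = 0 := by
  have h : HasProd g 0 := by
    have he : ∀ᶠ t : Finset ℕ in atTop, (0:ℝ) = ∏ m ∈ t, g m := by
      rw [eventually_atTop]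
      exact ⟨{i}, fun t ht =>
        (Finset.prod_eq_zero (ht (Finset.mem_singleton_self i)) hi).symm⟩
    exact Tendsto.congr' he tendsto_const_nhds
  exact h.tprod_eq

private lemma PS68.summable_c (t : ℝ) :
    Summable (fun k : ℕ => t ^ 2 / (((k:ℝ) + 1) ^ 2 * π ^ 2)) := by
  have h1 : Summable (fun k : ℕ => 1 / ((k:ℝ) + 1) ^ 2) := by
    have := (summable_nat_add_iff 1).mpr (Real.summable_one_div_nat_pow.mpr one_lt_two)
    apply this.congr
    intro k; push_cast; ring
  have h2 := h1.mul_left (t ^ 2 / π ^ 2)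
  apply h2.congr
  intro k
  rw [div_mul_div_comm, mul_one, mul_comm (π ^ 2)]


private lemma PS68.hasProd_succ {g : ℕ → ℝ} {P : ℝ} (h : HasProd (fun k => g (k+1)) P) :
    HasProd g (g 0 * P) := by
  classical
  have h1 : HasProd (Function.update g 0 1) P := by
    refine (Function.Injective.hasProd_iff (f := Function.update g 0 1)
      Nat.succ_injective ?_).mp ?_
    · intro m hm
      have hm0 : m = 0 := by
        rcases m with - | m
        · rfl
        · exact absurd ⟨m, rfl⟩ hm
      rw [hm0, Function.update_self]
    · refine h.congr_fun fun k => ?_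
      exact Function.update_of_ne (Nat.succ_ne_zero k) 1 g
  have h2 : HasProd (fun k : ℕ => if k = 0 then g 0 else 1) (g 0) := by
    have := hasProd_single (f := fun k : ℕ => if k = 0 then g 0 else 1) 0
      (fun b' hb' => by simp [hb'])
    simpa using this
  refine (h2.mul h1).congr_fun fun k => ?_
  rcases k with - | k
  · simp
  · simp [Function.update_of_ne (Nat.succ_ne_zero k)]

private lemma PS68.hasProd_sin (t : ℝ) (ht0 : t ≠ 0) (ht : |t| < 2 * π) :
    HasProd (fun k : ℕ => 1 - t ^ 2 / (((k:ℝ) + 1) ^ 2 * π ^ 2)) (Real.sin t / t) := by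
  have hπ := Real.pi_pos
  set g : ℕ → ℝ := fun k => 1 - t ^ 2 / (((k:ℝ) + 1) ^ 2 * π ^ 2) with hg
  have ht2 : t ^ 2 < 4 * π ^ 2 := by
    have h := abs_nonneg t
    nlinarith [sq_abs t]
  have hδ : 0 < 1 - t ^ 2 / (4 * π ^ 2) := by
    rw [sub_pos, div_lt_one (by positivity)]; linarith
  have hA : ∀ k : ℕ, (4:ℝ) ≤ (((k+1:ℕ):ℝ) + 1) ^ 2 := by
    intro k; push_cast; nlinarith [Nat.cast_nonneg (α := ℝ) k]
  have hckey : ∀ k : ℕ, t ^ 2 / ((((k+1:ℕ):ℝ) + 1) ^ 2 * π ^ 2) ≤ t ^ 2 / (4 * π ^ 2) := by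
    intro k
    apply div_le_div_of_nonneg_left (by positivity) (by positivity)
    have := hA k
    nlinarith
  have hglex : ∀ k : ℕ, 1 - t ^ 2 / (4 * π ^ 2) ≤ g (k+1) := by
    intro k
    have := hckey k
    simp only [hg]
    linarith
  have hpos : ∀ k : ℕ, 0 < g (k + 1) := fun k => lt_of_lt_of_le hδ (hglex k)
  have hgle1 : ∀ k : ℕ, g (k+1) ≤ 1 := by
    intro k
    simp only [hg]
    have : (0:ℝ) ≤ t ^ 2 / ((((k+1:ℕ):ℝ) + 1) ^ 2 * π ^ 2) := by positivity
    linarith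
  have hlog : Summable fun k : ℕ => Real.log (g (k + 1)) := by
    have hb : Summable fun k : ℕ =>
        (t ^ 2 / ((((k+1:ℕ):ℝ) + 1) ^ 2 * π ^ 2)) * (1 - t ^ 2 / (4 * π ^ 2))⁻¹ :=
      ((summable_nat_add_iff 1).mpr (PS68.summable_c t)).mul_right _
    have hnn : ∀ k : ℕ, 0 ≤ - Real.log (g (k+1)) := by
      intro k
      simpa using Real.log_nonpos (le_of_lt (hpos k)) (hgle1 k)
    have hle : ∀ k : ℕ, - Real.log (g (k+1)) ≤
        (t ^ 2 / ((((k+1:ℕ):ℝ) + 1) ^ 2 * π ^ 2)) * (1 - t ^ 2 / (4 * π ^ 2))⁻¹ := by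
      intro k
      have hgne := ne_of_gt (hpos k)
      have h2 := Real.log_le_sub_one_of_pos (inv_pos.mpr (hpos k))
      rw [Real.log_inv] at h2
      have h3 : (g (k+1))⁻¹ - 1 = (1 - g (k+1)) / g (k+1) := by
        rw [eq_div_iff hgne, sub_mul, inv_mul_cancel₀ hgne, one_mul]
      have h4 : (1 - g (k+1)) = t ^ 2 / ((((k+1:ℕ):ℝ) + 1) ^ 2 * π ^ 2) := by
        simp only [hg]; ring
      have h5 : (1 - g (k+1)) / g (k+1) ≤ (1 - g (k+1)) / (1 - t ^ 2 / (4 * π ^ 2)) := by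
        apply div_le_div_of_nonneg_left _ hδ (hglex k)
        rw [h4]; positivity
      calc -Real.log (g (k+1)) ≤ (g (k+1))⁻¹ - 1 := h2
        _ = (1 - g (k+1)) / g (k+1) := h3
        _ ≤ (1 - g (k+1)) / (1 - t ^ 2 / (4 * π ^ 2)) := h5
        _ = _ := by rw [h4, div_eq_mul_inv]
    have := (Summable.of_nonneg_of_le hnn hle hb).neg
    simpa using this
  have hmulshift : Multipliable fun k : ℕ => g (k + 1) := by
    have h1 := hlog.hasSum.rexp
    refine ⟨Real.exp (∑' k, Real.log (g (k+1))), h1.congr_fun fun k => ?_⟩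
    exact (Real.exp_log (hpos k)).symm
  obtain ⟨P, hP⟩ := hmulshift
  have hM : Multipliable g := ⟨g 0 * P, PS68.hasProd_succ hP⟩
  refine (hM.hasProd_iff_tendsto_nat).mpr ?_
  have h0 := Real.tendsto_euler_sin_prod (t / π)
  have hterm : ∀ n : ℕ, π * (t / π) * ∏ j ∈ Finset.range n, (1 - (t/π) ^ 2 / ((j:ℝ) + 1) ^ 2)
      = t * ∏ j ∈ Finset.range n, g j := by
    intro n
    have h1 : π * (t / π) = t := by
      rw [mul_comm, div_mul_cancel₀ _ (ne_of_gt hπ)]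
    rw [h1]
    congr 1
    apply Finset.prod_congr rfl
    intro j _
    simp only [hg]
    have hj : ((j:ℝ) + 1) ≠ 0 := by positivity
    rw [div_pow]
    congr 1
    rw [div_div, mul_comm]
  have hsin : Real.sin (π * (t/π)) = Real.sin t := by
    rw [mul_comm, div_mul_cancel₀ _ (ne_of_gt hπ)]
  rw [hsin] at h0
  simp only [hterm] at h0
  have h2 := h0.const_mul t⁻¹
  have h3 : ∀ n : ℕ, t⁻¹ * (t * ∏ j ∈ Finset.range n, g j) = ∏ j ∈ Finset.range n, g j := by
    intro n; rw [inv_mul_cancel_left₀ ht0]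
  simp only [h3] at h2
  rw [inv_mul_eq_div] at h2
  exact h2

private lemma PS68.f_pos (x : ℝ) (hx : |x| < 2 * π) (m : ℕ) (hm : 2 ≤ m) :
    0 < 1 - x ^ 2 / ((m:ℝ) ^ 2 * π ^ 2) := by
  have hπ := Real.pi_pos
  have hx2 : x ^ 2 < 4 * π ^ 2 := by nlinarith [sq_abs x, abs_nonneg x]
  have hm4 : (4:ℝ) ≤ (m:ℝ) ^ 2 := by
    have : (2:ℝ) ≤ (m:ℝ) := by exact_mod_cast hm
    nlinarith
  have h1 : x ^ 2 / ((m:ℝ) ^ 2 * π ^ 2) ≤ x ^ 2 / (4 * π ^ 2) :=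
    div_le_div_of_nonneg_left (by positivity) (by positivity) (by nlinarith)
  have h2 : x ^ 2 / (4 * π ^ 2) < 1 := by
    rw [div_lt_one (by positivity)]; linarith
  linarith

private lemma PS68.hasProd_multiples (x : ℝ) (hx0 : x ≠ 0) (hx : |x| < 2 * π)
    (n : ℕ) (hn : 1 ≤ n) :
    HasProd (fun m : ℕ => if n ∣ (m+1) then 1 - x ^ 2 / (((m+1:ℕ):ℝ) ^ 2 * π ^ 2) else 1)
      (Real.sin (x / n) / (x / n)) := by
  have hn0 : ((n:ℝ)) ≠ 0 := Nat.cast_ne_zero.mpr (by omega)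
  have hn1 : (1:ℝ) ≤ (n:ℝ) := by exact_mod_cast hn
  have hxn0 : x / (n:ℝ) ≠ 0 := div_ne_zero hx0 hn0
  have hxn : |x / (n:ℝ)| < 2 * π := by
    rw [abs_div, abs_of_pos (by linarith : (0:ℝ) < (n:ℝ))]
    calc |x| / (n:ℝ) ≤ |x| / 1 := div_le_div_of_nonneg_left (abs_nonneg x) one_pos hn1
      _ = |x| := div_one _
      _ < 2 * π := hx
  have hbase := PS68.hasProd_sin (x / n) hxn0 hxn
  have hinj : Function.Injective (fun k : ℕ => n * (k+1) - 1) := by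
    intro p q hpq
    simp only at hpq
    have hp : 0 < n * (p+1) := Nat.mul_pos (by omega) (Nat.succ_pos p)
    have hq : 0 < n * (q+1) := Nat.mul_pos (by omega) (Nat.succ_pos q)
    have h1 : n * (p+1) = n * (q+1) := by omega
    have := Nat.eq_of_mul_eq_mul_left (by omega : 0 < n) h1
    omega
  refine (hinj.hasProd_iff ?_).mp ?_
  · intro m hm
    rw [if_neg]
    rintro ⟨q, hq⟩
    have hq0 : 0 < q := by
      rcases Nat.eq_zero_or_pos q with h | h
      · rw [h, Nat.mul_zero] at hq; omega
      · exact h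
    have he : q - 1 + 1 = q := by omega
    refine hm ⟨q - 1, ?_⟩
    show n * (q - 1 + 1) - 1 = m
    rw [he]
    omega
  · refine hbase.congr_fun fun k => ?_
    simp only [Function.comp_apply]
    have hpos : 0 < n * (k+1) := Nat.mul_pos (by omega) (Nat.succ_pos k)
    have h1 : n * (k+1) - 1 + 1 = n * (k+1) := by omega
    rw [h1, if_pos ⟨k+1, rfl⟩]
    congr 1
    rw [div_pow, div_div]
    congr 1
    push_cast
    ring

private lemma PS68.perN (x : ℝ) (hx0 : x ≠ 0) (hx : |x| < 2 * π) (n : ℕ) (hn : 1 ≤ n)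
    (hs1 : Real.sin (x / n) ≠ 0) (hs2 : Real.sin (x / (2 * (n:ℝ))) ≠ 0) (z : ℤ) :
    HasProd (fun m : ℕ => (1 - x ^ 2 / (((m+1:ℕ):ℝ) ^ 2 * π ^ 2)) ^
        (((if n ∣ (m+1) then 1 else 0) - 2 * (if 2*n ∣ (m+1) then 1 else 0)) * z))
      ((x / (2 * (n:ℝ)) * Real.cot (x / (2 * (n:ℝ)))) ^ z) := by
  have hπ := Real.pi_pos
  have hn0 : ((n:ℝ)) ≠ 0 := Nat.cast_ne_zero.mpr (by omega)
  have hcast : ((2*n : ℕ):ℝ) = 2 * (n:ℝ) := by push_cast; ring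
  have hy0 : x / (2 * (n:ℝ)) ≠ 0 := div_ne_zero hx0 (by positivity)
  have hxn0 : x / (n:ℝ) ≠ 0 := div_ne_zero hx0 hn0
  have hS1 : Real.sin (x / n) / (x / n) ≠ 0 := div_ne_zero hs1 hxn0
  have hS2 : Real.sin (x / (2 * (n:ℝ))) / (x / (2 * (n:ℝ))) ≠ 0 := div_ne_zero hs2 hy0
  have h1 := PS68.hasProd_zpow (PS68.hasProd_multiples x hx0 hx n hn) z (Or.inl hS1)
  have h2' := PS68.hasProd_zpow (PS68.hasProd_multiples x hx0 hx (2*n) (by omega))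
    ((-2) * z) (Or.inl (by rw [hcast]; exact hS2))
  rw [hcast] at h2'
  have h3 := h1.mul h2'
  have h2y : x / (n:ℝ) = 2 * (x / (2 * (n:ℝ))) := by
    field_simp
  have Teq : x / (2 * (n:ℝ)) * Real.cot (x / (2 * (n:ℝ)))
      = (Real.sin (x / (n:ℝ)) / (x / (n:ℝ)))
        * (Real.sin (x / (2 * (n:ℝ))) / (x / (2 * (n:ℝ)))) ^ (-2 : ℤ) := by
    rw [Real.cot_eq_cos_div_sin, h2y, Real.sin_two_mul, zpow_neg]
    rw [show ((2:ℤ)) = ((2:ℕ):ℤ) by norm_num, zpow_natCast]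
    field_simp
  have hval : (x / (2 * (n:ℝ)) * Real.cot (x / (2 * (n:ℝ)))) ^ z
      = (Real.sin (x / (n:ℝ)) / (x / (n:ℝ))) ^ z
        * ((Real.sin (x / (2 * (n:ℝ))) / (x / (2 * (n:ℝ)))) ^ ((-2) * z)) := by
    rw [Teq, mul_zpow, zpow_mul]
  rw [hval]
  refine h3.congr_fun fun m => ?_
  by_cases hd2 : 2*n ∣ m+1
  · have hd1 : n ∣ m+1 := (dvd_mul_left n 2).trans hd2
    have hm2 : 2 ≤ m+1 := le_trans (by omega : 2 ≤ 2*n) (Nat.le_of_dvd (by omega) hd2)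
    have hf := PS68.f_pos x hx (m+1) hm2
    simp only [if_pos hd1, if_pos hd2]
    rw [show ((1:ℤ) - 2 * 1) * z = z + (-2) * z by ring, zpow_add₀ (ne_of_gt hf)]
  · by_cases hd1 : n ∣ m+1
    · simp only [if_pos hd1, if_neg hd2, one_zpow, mul_one]
      congr 1
      ring
    · simp only [if_neg hd1, if_neg hd2, one_zpow, one_mul]
      norm_num

private lemma PS68.exponent_id (a : ℕ → ℤ) (s : Finset ℕ)
    (hs : ∀ n, n ∈ s ↔ (1 ≤ n ∧ a n ≠ 0)) (m : ℕ) (hm : 1 ≤ m) :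
    ∑ n ∈ s, ((if n ∣ m then (1:ℤ) else 0) - 2 * (if 2*n ∣ m then 1 else 0)) * a n
      = ∑ d ∈ m.divisors, (-1:ℤ) ^ (d - 1) * a (m / d) := by
  classical
  have hm0 : m ≠ 0 := by omega
  have key : ∀ n, n ∈ s → n ∣ m →
      ((if n ∣ m then (1:ℤ) else 0) - 2 * (if 2*n ∣ m then 1 else 0)) * a n
        = (-1:ℤ) ^ (m / n - 1) * a n := by
    intro n hns hdvd
    have hn1 : 1 ≤ n := ((hs n).mp hns).1
    have hq1 : 1 ≤ m / n := Nat.div_pos (Nat.le_of_dvd (by omega) hdvd) (by omega)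
    have hmeq : n * (m / n) = m := Nat.mul_div_cancel' hdvd
    have h2 : 2 * n ∣ m ↔ 2 ∣ m / n := by
      constructor
      · rintro ⟨r, hr⟩
        refine ⟨r, ?_⟩
        have h3 : n * (m / n) = n * (2 * r) := by rw [hmeq, hr]; ring
        exact Nat.eq_of_mul_eq_mul_left (by omega) h3
      · rintro ⟨r, hr⟩
        exact ⟨r, by rw [← hmeq, hr]; ring⟩
    rw [if_pos hdvd]
    by_cases h2q : 2 ∣ m / n
    · obtain ⟨r, hr⟩ := h2q
      rw [if_pos (h2.mpr ⟨r, hr⟩)]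
      have hodd : Odd (m / n - 1) := ⟨r - 1, by omega⟩
      rw [hodd.neg_one_pow]
      ring
    · rw [if_neg (fun hc => h2q (h2.mp hc))]
      have heven : Even (m / n - 1) := ⟨m / n / 2, by omega⟩
      rw [heven.neg_one_pow]
      ring
  have hRHS : ∑ d ∈ m.divisors, (-1:ℤ) ^ (d - 1) * a (m / d)
      = ∑ d ∈ m.divisors, (-1:ℤ) ^ (m / d - 1) * a d := by
    rw [← Nat.sum_div_divisors m (fun d => (-1:ℤ) ^ (m / d - 1) * a d)]
    refine Finset.sum_congr rfl fun d hd => ?_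
    obtain ⟨hdvd, -⟩ := Nat.mem_divisors.mp hd
    rw [Nat.div_div_self hdvd hm0]
  rw [hRHS]
  have hfilt : ∑ n ∈ s, ((if n ∣ m then (1:ℤ) else 0) - 2 * (if 2*n ∣ m then 1 else 0)) * a n
      = ∑ n ∈ s.filter (· ∣ m),
        ((if n ∣ m then (1:ℤ) else 0) - 2 * (if 2*n ∣ m then 1 else 0)) * a n := by
    refine (Finset.sum_filter_of_ne fun n hn hne => ?_).symm
    by_contra hnd
    apply hne
    rw [if_neg hnd, if_neg (fun hc => hnd ((dvd_mul_left n 2).trans hc))]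
    ring
  have hsub : ∑ d ∈ m.divisors.filter (· ∈ s), (-1:ℤ) ^ (m / d - 1) * a d
      = ∑ d ∈ m.divisors, (-1:ℤ) ^ (m / d - 1) * a d := by
    refine Finset.sum_subset (Finset.filter_subset _ _) fun d hd hnd => ?_
    have hd1 : 1 ≤ d := Nat.pos_of_mem_divisors hd
    have : d ∉ s := fun hc => hnd (Finset.mem_filter.mpr ⟨hd, hc⟩)
    have ha : a d = 0 := by
      by_contra hne
      exact this ((hs d).mpr ⟨hd1, hne⟩)
    rw [ha, mul_zero]
  rw [hfilt, ← hsub]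
  have hset : s.filter (· ∣ m) = m.divisors.filter (· ∈ s) := by
    ext n
    simp only [Finset.mem_filter, Nat.mem_divisors]
    constructor
    · rintro ⟨hns, hd⟩; exact ⟨⟨hd, hm0⟩, hns⟩
    · rintro ⟨⟨hd, -⟩, hns⟩; exact ⟨hns, hd⟩
  rw [hset]
  refine Finset.sum_congr rfl fun n hn => ?_
  obtain ⟨hdv, hns⟩ := Finset.mem_filter.mp hn
  exact key n hns (Nat.mem_divisors.mp hdv).1

/-- Pólya–Szegő Exercise 68: for a finitely supported integer sequence `a` with
`B n = ∑_{d ∣ n} (-1)^{d-1} a (n/d)`, and `0 < |x| < 2π` with each `x/(2n)` not a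
multiple of `π`, `∏ ((x/(2n)) cot(x/(2n)))^{a_n} = ∏ (1 - x²/(n²π²))^{B_n}`. -/
theorem polya_szego_68 (a B : ℕ → ℤ)
    (hfin : (Function.support a).Finite)
    (hB : ∀ n, 1 ≤ n → B n = ∑ d ∈ n.divisors, (-1 : ℤ) ^ (d - 1) * a (n / d))
    (x : ℝ) (hx0 : 0 < |x|) (hxpi : |x| < 2 * π)
    (hmult : ∀ n : ℕ, 1 ≤ n → ∀ k : ℤ, x / (2 * n) ≠ k * π) :
    ∏' n : ℕ, ((x / (2 * ((n : ℝ) + 1))) * Real.cot (x / (2 * ((n : ℝ) + 1)))) ^ (a (n + 1))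
      = ∏' n : ℕ, (1 - x ^ 2 / (((n : ℝ) + 1) ^ 2 * π ^ 2)) ^ (B (n + 1)) := by
  classical
  have hπ := Real.pi_pos
  have hx0' : x ≠ 0 := by
    intro h; rw [h] at hx0; simp at hx0
  -- finite support set
  have hfin2 : (Function.support fun m : ℕ => a (m + 1)).Finite := by
    have hsub : (Function.support fun m : ℕ => a (m + 1))
        ⊆ (fun m : ℕ => m + 1) ⁻¹' (Function.support a) := fun m hm => hm
    exact ((hfin.preimage (add_left_injective 1).injOn)).subset hsub
  set s₀ : Finset ℕ := hfin2.toFinset with hs₀def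
  have hmem₀ : ∀ m, m ∈ s₀ ↔ a (m + 1) ≠ 0 := by
    intro m
    rw [hs₀def, Set.Finite.mem_toFinset]
    exact Iff.rfl
  set s : Finset ℕ := s₀.image (· + 1) with hsdef
  have hmem : ∀ n, n ∈ s ↔ (1 ≤ n ∧ a n ≠ 0) := by
    intro n
    rw [hsdef, Finset.mem_image]
    constructor
    · rintro ⟨m, hm, rfl⟩
      exact ⟨by omega, (hmem₀ m).mp hm⟩
    · rintro ⟨h1, h2⟩
      exact ⟨n - 1, (hmem₀ (n-1)).mpr (by rwa [Nat.sub_add_cancel h1]),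
        Nat.sub_add_cancel h1⟩
  -- LHS reduction to finite product
  have hcast1 : ∀ m : ℕ, ((m + 1:ℕ):ℝ) = (m:ℝ) + 1 := by intro m; push_cast; ring
  have hLHS : (∏' (m:ℕ), (x / (2 * ((m:ℝ) + 1)) * Real.cot (x / (2 * ((m:ℝ) + 1)))) ^ (a (m+1)))
      = ∏ n ∈ s, (x / (2 * (n:ℝ)) * Real.cot (x / (2 * (n:ℝ)))) ^ (a n) := by
    rw [tprod_eq_prod (s := s₀) (fun m hm => by
      rw [of_not_not (fun h => hm ((hmem₀ m).mpr h)), zpow_zero])]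
    rw [hsdef, Finset.prod_image (fun p _ q _ h => by omega)]
    refine Finset.prod_congr rfl fun m _ => ?_
    rw [hcast1 m]
  by_cases hcrit : x ^ 2 = π ^ 2 ∧ a 1 ≠ 0
  · -- degenerate case
    obtain ⟨hx2, ha1⟩ := hcrit
    have hB1 : B 1 = a 1 := by
      rw [hB 1 le_rfl]
      simp [Nat.divisors_one]
    rw [hLHS]
    have h1s : 1 ∈ s := (hmem 1).mpr ⟨le_rfl, ha1⟩
    have hcos : Real.cos (x / 2) = 0 := by
      have habs : |x| = π := by
        nlinarith [sq_abs x, abs_nonneg x]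
      rcases (abs_eq (le_of_lt hπ)).mp habs with h | h
      · rw [h]; exact Real.cos_pi_div_two
      · rw [h, show -π / 2 = -(π/2) by ring, Real.cos_neg]
        exact Real.cos_pi_div_two
    have hzero : (x / (2 * ((1:ℕ):ℝ)) * Real.cot (x / (2 * ((1:ℕ):ℝ)))) ^ (a 1) = 0 := by
      rw [show (2 * ((1:ℕ):ℝ)) = 2 by norm_cast]
      rw [Real.cot_eq_cos_div_sin, hcos, zero_div, mul_zero]
      exact zero_zpow _ ha1
    rw [Finset.prod_eq_zero h1s hzero]
    refine (PS68.tprod_eq_zero 0 ?_).symm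
    have hbase : 1 - x ^ 2 / (((0:ℕ):ℝ) + 1) ^ 2 / π ^ 2 = 0 := by
      norm_num
      rw [hx2]
      field_simp
      norm_num
    have hbase' : (1 - x ^ 2 / ((((0:ℕ):ℝ) + 1) ^ 2 * π ^ 2)) = 0 := by
      norm_num at hbase ⊢
      rw [hx2]
      field_simp
      norm_num
    rw [hbase', hB1]
    exact zero_zpow _ ha1
  · -- main case
    have hcrit2 : x ^ 2 = π ^ 2 → a 1 = 0 := by
      intro h
      by_contra h2
      exact hcrit ⟨h, h2⟩
    -- sin nonvanishing
    have hsin2 : ∀ n : ℕ, 1 ≤ n → Real.sin (x / (2 * (n:ℝ))) ≠ 0 := by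
      intro n hn hzero
      obtain ⟨k, hk⟩ := Real.sin_eq_zero_iff.mp hzero
      exact hmult n hn k hk.symm
    have hsin : ∀ n ∈ s, Real.sin (x / (n:ℝ)) ≠ 0 := by
      intro n hns hzero
      obtain ⟨hn1, han⟩ := (hmem n).mp hns
      have hn0 : ((n:ℝ)) ≠ 0 := Nat.cast_ne_zero.mpr (by omega)
      have hnR : (1:ℝ) ≤ (n:ℝ) := by exact_mod_cast hn1
      obtain ⟨k, hk⟩ := Real.sin_eq_zero_iff.mp hzero
      have hxk : x = (k:ℝ) * π * n := by
        field_simp at hk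
        linarith [hk]
      rcases eq_or_ne k 0 with h0 | h0
      · rw [h0] at hxk; simp at hxk; exact hx0' hxk
      · have hk1 : (1:ℝ) ≤ |(k:ℝ)| := by
          have := Int.one_le_abs h0
          calc (1:ℝ) ≤ ((|k| : ℤ) : ℝ) := by exact_mod_cast this
            _ = |(k:ℝ)| := by push_cast; ring
        have habs : |x| = |(k:ℝ)| * π * n := by
          rw [hxk]
          rw [abs_mul, abs_mul, abs_of_pos hπ, abs_of_pos (by linarith : (0:ℝ) < (n:ℝ))]
        have hlt : |(k:ℝ)| * n < 2 := by
          rw [habs] at hxpi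
          nlinarith
        have hn2 : ¬ (2 ≤ n) := by
          intro h2
          have : (2:ℝ) ≤ (n:ℝ) := by exact_mod_cast h2
          nlinarith
        have hn1' : n = 1 := by omega
        have hkabs : |(k:ℝ)| = 1 := by
          rw [hn1'] at hlt
          have hk2 : |(k:ℝ)| < 2 := by push_cast at hlt; linarith
          have hZ2 : |k| < 2 := by
            have h3 : ((|k|:ℤ):ℝ) < 2 := by rw [Int.cast_abs]; exact hk2
            exact_mod_cast h3
          have hZ1 : 1 ≤ |k| := Int.one_le_abs h0
          have hZ : |k| = 1 := by omega
          rw [← Int.cast_abs, hZ]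
          norm_num
        have hx2 : x ^ 2 = π ^ 2 := by
          rw [hxk, hn1']
          push_cast
          rw [mul_one, mul_pow]
          have : (k:ℝ) ^ 2 = 1 := by
            rw [← sq_abs, hkabs]; norm_num
          rw [this, one_mul]
        have := hcrit2 hx2
        rw [hn1'] at han
        exact han this
    -- per-n HasProd
    have hp : ∀ n ∈ s, HasProd
        (fun m : ℕ => (1 - x ^ 2 / (((m+1:ℕ):ℝ) ^ 2 * π ^ 2)) ^
          (((if n ∣ (m+1) then 1 else 0) - 2 * (if 2*n ∣ (m+1) then 1 else 0)) * a n))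
        ((x / (2 * (n:ℝ)) * Real.cot (x / (2 * (n:ℝ)))) ^ (a n)) := by
      intro n hns
      have hn1 := ((hmem n).mp hns).1
      exact PS68.perN x hx0' hxpi n hn1 (hsin n hns) (hsin2 n hn1) (a n)
    have hbig := PS68.hasProd_finset s _ _ hp
    have hpoint : ∀ m : ℕ, (1 - x ^ 2 / (((m:ℝ) + 1) ^ 2 * π ^ 2)) ^ (B (m+1))
        = ∏ n ∈ s, (1 - x ^ 2 / (((m+1:ℕ):ℝ) ^ 2 * π ^ 2)) ^
          (((if n ∣ (m+1) then 1 else 0) - 2 * (if 2*n ∣ (m+1) then 1 else 0)) * a n) := by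
      intro m
      have hBval : B (m+1) = ∑ n ∈ s,
          ((if n ∣ (m+1) then (1:ℤ) else 0) - 2 * (if 2*n ∣ (m+1) then 1 else 0)) * a n := by
        rw [hB (m+1) (by omega), ← PS68.exponent_id a s hmem (m+1) (by omega)]
      have hc : (1 - x ^ 2 / (((m+1:ℕ):ℝ) ^ 2 * π ^ 2)) ≠ 0 ∨
          ∀ n ∈ s, ((if n ∣ (m+1) then (1:ℤ) else 0) - 2 * (if 2*n ∣ (m+1) then 1 else 0)) * a n = 0 := by
        rcases Nat.lt_or_ge m 1 with hm | hm
        · -- m = 0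
          have hm0 : m = 0 := by omega
          by_cases hxx : x ^ 2 = π ^ 2
          · right
            intro n hns
            obtain ⟨hn1, han⟩ := (hmem n).mp hns
            have hne1 : n ≠ 1 := by
              intro h
              rw [h] at han
              exact han (hcrit2 hxx)
            rw [hm0]
            rw [if_neg (by intro h; exact hne1 (Nat.dvd_one.mp h)),
              if_neg (by intro h; have := Nat.dvd_one.mp h; omega)]
            ring
          · left
            rw [hm0]
            intro hzero
            apply hxx
            have h1 : ((0+1:ℕ):ℝ) = 1 := by norm_num
            rw [h1] at hzero
            have : x ^ 2 / (1 ^ 2 * π ^ 2) = 1 := by linarith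
            field_simp at this
            linarith
        · left
          exact ne_of_gt (PS68.f_pos x hxpi (m+1) (by omega))
      rw [PS68.zpow_sum _ s _ hc, ← hBval, hcast1 m]
    have hbig2 : HasProd (fun m : ℕ => (1 - x ^ 2 / (((m:ℝ) + 1) ^ 2 * π ^ 2)) ^ (B (m+1)))
        (∏ n ∈ s, (x / (2 * (n:ℝ)) * Real.cot (x / (2 * (n:ℝ)))) ^ (a n)) :=
      hbig.congr_fun hpoint
    rw [hLHS, ← hbig2.tprod_eq]
end

section
/- For real x with 0 < |x| < 2π and any positive integer m, the infinite product ∏_{k=1}^∞ (1 - x²/((km)²π²))^{(-1)^{k-1}} converges and equals (x/(2m)) · cot(x/(2m)). -/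
open Real Filter Finset Function Topology

noncomputable def aa (y : ℝ) (j : ℕ) : ℝ := 1 - y ^ 2 / ((j : ℝ) ^ 2 * π ^ 2)

lemma sq_lt {y : ℝ} (hy : |y| < 2 * π) : y ^ 2 < 4 * π ^ 2 := by
  have := abs_nonneg y
  nlinarith [sq_abs y]

lemma aa_pos {y : ℝ} (hy : |y| < 2 * π) {j : ℕ} (hj : 2 ≤ j) : 0 < aa y j := by
  have hπ := pi_pos
  have h1 : (4 : ℝ) * π ^ 2 ≤ (j : ℝ) ^ 2 * π ^ 2 := by
    have h2j : (2 : ℝ) ≤ (j : ℝ) := by exact_mod_cast hj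
    have : (4:ℝ) ≤ (j:ℝ)^2 := by nlinarith
    nlinarith [sq_nonneg π]
  have h2 := sq_lt hy
  have h3 : 0 < (j : ℝ) ^ 2 * π ^ 2 := by positivity
  have : y ^ 2 / ((j : ℝ) ^ 2 * π ^ 2) < 1 := by
    rw [div_lt_one h3]; linarith
  unfold aa; linarith

lemma aa_le_one (y : ℝ) (j : ℕ) (hj : 1 ≤ j) : aa y j ≤ 1 := by
  have hπ := pi_pos
  have : (0:ℝ) < (j:ℝ) := by exact_mod_cast hj
  have : 0 ≤ y ^ 2 / ((j : ℝ) ^ 2 * π ^ 2) := by positivity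
  unfold aa; linarith

lemma prod_eq (y : ℝ) (hy : |y| < 2 * π) (n : ℕ) :
    (∏ k ∈ range n, (aa y (k + 1)) ^ ((-1 : ℤ) ^ k)) *
      (∏ j ∈ range (n / 2), aa y (2 * (j + 1))) ^ 2
    = ∏ j ∈ range n, aa y (j + 1) := by
  induction n with
  | zero => simp
  | succ n ih =>
    rcases Nat.even_or_odd n with he | ho
    · have hpow : ((-1 : ℤ) ^ n) = 1 := he.neg_one_pow
      obtain ⟨m, rfl⟩ := he
      have hdiv : (m + m + 1) / 2 = (m + m) / 2 := by omega
      rw [prod_range_succ, prod_range_succ, hdiv, hpow, zpow_one, ← ih]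
      ring
    · have hpow : ((-1 : ℤ) ^ n) = -1 := ho.neg_one_pow
      obtain ⟨m, rfl⟩ := ho
      have hdiv : (2 * m + 1 + 1) / 2 = (2 * m + 1) / 2 + 1 := by omega
      have h2 : 2 * ((2 * m + 1) / 2 + 1) = 2 * m + 1 + 1 := by omega
      have hapos : 0 < aa y (2 * m + 1 + 1) := aa_pos hy (by omega)
      rw [prod_range_succ (fun k => (aa y (k + 1)) ^ ((-1 : ℤ) ^ k)) (2 * m + 1), hdiv,
        prod_range_succ (fun j => aa y (2 * (j + 1))) ((2 * m + 1) / 2),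
        prod_range_succ (fun j => aa y (j + 1)) (2 * m + 1), h2, hpow,
        zpow_neg_one, ← ih]
      field_simp

lemma tendsto_S (y : ℝ) (hy0 : y ≠ 0) : Tendsto (fun n : ℕ => ∏ j ∈ range n, aa y (j + 1))
    atTop (𝓝 (sin y / y)) := by
  have hπ : (π : ℝ) ≠ 0 := pi_ne_zero
  have h := Real.tendsto_euler_sin_prod (y / π)
  have h2 : Tendsto (fun n : ℕ => y * ∏ j ∈ range n, aa y (j + 1)) atTop (𝓝 (sin y)) := by
    have hval : π * (y / π) = y := by field_simp
    rw [← hval]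
    refine h.congr fun n => ?_
    rw [hval]
    congr 1
    refine prod_congr rfl fun j _ => ?_
    unfold aa
    push_cast
    field_simp
  have h3 := h2.const_mul y⁻¹
  rw [inv_mul_eq_div] at h3
  refine h3.congr fun n => ?_
  rw [inv_mul_cancel_left₀ hy0]

lemma tendsto_T (y : ℝ) (hy0 : y ≠ 0) : Tendsto (fun n : ℕ => ∏ j ∈ range n, aa y (2 * (j + 1)))
    atTop (𝓝 (sin (y / 2) / (y / 2))) := by
  refine (tendsto_S (y / 2) (by simpa using hy0)).congr fun n => prod_congr rfl fun j _ => ?_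
  unfold aa
  have hπ : (π : ℝ) ≠ 0 := pi_ne_zero
  push_cast
  have h1 : ((j : ℝ) + 1) ^ 2 * π ^ 2 ≠ 0 := by positivity
  have h2 : (2 * ((j : ℝ) + 1)) ^ 2 * π ^ 2 ≠ 0 := by positivity
  field_simp

lemma sin_half_ne {y : ℝ} (hy0 : y ≠ 0) (hy : |y| < 2 * π) : sin (y / 2) ≠ 0 := by
  rw [abs_lt] at hy
  rcases hy0.lt_or_gt with h | h
  · have h1 : -π < y / 2 := by linarith [hy.1]
    have h2 : y / 2 < 0 := by linarith
    have := Real.sin_pos_of_pos_of_lt_pi (x := -(y / 2)) (by linarith) (by linarith)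
    rw [Real.sin_neg] at this
    linarith [this]
  · have := Real.sin_pos_of_pos_of_lt_pi (x := y / 2) (by linarith) (by linarith [hy.2])
    exact ne_of_gt this

lemma tendsto_P (y : ℝ) (hy0 : y ≠ 0) (hy : |y| < 2 * π) :
    Tendsto (fun n : ℕ => ∏ k ∈ range n, (aa y (k + 1)) ^ ((-1 : ℤ) ^ k)) atTop
      (𝓝 ((y / 2) * Real.cot (y / 2))) := by
  have hhalf : Tendsto (fun n : ℕ => n / 2) atTop atTop :=
    tendsto_atTop_atTop.2 fun b => ⟨2 * b, fun n hn => by omega⟩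
  have hT : Tendsto (fun n : ℕ => ∏ j ∈ range (n / 2), aa y (2 * (j + 1))) atTop
      (𝓝 (sin (y / 2) / (y / 2))) := (tendsto_T y hy0).comp hhalf
  have hy2 : y / 2 ≠ 0 := by simpa using hy0
  have hs : sin (y / 2) ≠ 0 := sin_half_ne hy0 hy
  have hden : (sin (y / 2) / (y / 2)) ^ 2 ≠ 0 := by positivity
  have hTpos : ∀ n : ℕ, (0 : ℝ) < ∏ j ∈ range n, aa y (2 * (j + 1)) := fun n =>
    prod_pos fun j _ => aa_pos hy (by omega)
  have hdiv : Tendsto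
      (fun n : ℕ => (∏ j ∈ range n, aa y (j + 1)) /
        (∏ j ∈ range (n / 2), aa y (2 * (j + 1))) ^ 2) atTop
      (𝓝 ((sin y / y) / (sin (y / 2) / (y / 2)) ^ 2)) :=
    (tendsto_S y hy0).div (hT.pow 2) hden
  have heq : (sin y / y) / (sin (y / 2) / (y / 2)) ^ 2 = (y / 2) * Real.cot (y / 2) := by
    have hsin : sin y = 2 * sin (y / 2) * cos (y / 2) := by
      have h2 : 2 * (y / 2) = y := by ring
      rw [← h2, Real.sin_two_mul]; ring
    rw [Real.cot_eq_cos_div_sin, hsin]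
    field_simp
  rw [heq] at hdiv
  refine hdiv.congr fun n => ?_
  rw [eq_comm, eq_div_iff (pow_ne_zero 2 (ne_of_gt (hTpos (n / 2))))]
  exact prod_eq y hy n

lemma multipliable_F (y : ℝ) (hy : |y| < 2 * π) :
    Multipliable (fun k : ℕ => (aa y (k + 1)) ^ ((-1 : ℤ) ^ k)) := by
  set F : ℕ → ℝ := fun k => (aa y (k + 1)) ^ ((-1 : ℤ) ^ k) with hF
  set g : ℕ → ℝ := Function.update F 0 1 with hg
  have haapos : ∀ k : ℕ, 0 < aa y (k + 2) := fun k => aa_pos hy (by omega)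
  have hgpos : ∀ k, 0 < g k := by
    intro k
    match k with
    | 0 => simp [hg]
    | (j + 1) =>
      rw [hg, Function.update_of_ne (Nat.succ_ne_zero j)]
      exact zpow_pos (haapos j) _
  set c : ℝ := 1 - y ^ 2 / (4 * π ^ 2) with hc
  have hπ := pi_pos
  have hcpos : 0 < c := by
    have h1 := sq_lt hy
    have h2 : (0:ℝ) < 4 * π ^ 2 := by positivity
    have : y ^ 2 / (4 * π ^ 2) < 1 := by rw [div_lt_one h2]; linarith
    simp only [hc]; linarith
  have hclesaa : ∀ k : ℕ, c ≤ aa y (k + 2) := by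
    intro k
    have h1 : (4 : ℝ) * π ^ 2 ≤ ((k : ℝ) + 2) ^ 2 * π ^ 2 := by
      nlinarith [sq_nonneg π, Nat.cast_nonneg (α := ℝ) k, sq_nonneg (k:ℝ)]
    have : y ^ 2 / (((k : ℝ) + 2) ^ 2 * π ^ 2) ≤ y ^ 2 / (4 * π ^ 2) :=
      div_le_div_of_nonneg_left (sq_nonneg y) (by positivity) h1
    unfold aa
    push_cast
    simp only [hc]
    linarith
  have hlogbound : ∀ k : ℕ, ‖Real.log (g k)‖ ≤ (y ^ 2 / (c * π ^ 2)) * (1 / ((k : ℝ) + 1) ^ 2) := by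
    intro k
    match k with
    | 0 =>
      have : ‖Real.log (g 0)‖ = 0 := by simp [hg]
      rw [this]; positivity
    | (j + 1) =>
      rw [hg, Function.update_of_ne (Nat.succ_ne_zero j), hF]
      have hpos := haapos j
      have hle1 : aa y (j + 2) ≤ 1 := aa_le_one y (j + 2) (by omega)
      simp only []
      rw [Real.log_zpow, Real.norm_eq_abs, abs_mul]
      have habs1 : |(((-1 : ℤ) ^ (j + 1) : ℤ) : ℝ)| = 1 := by
        push_cast
        rw [abs_pow, abs_neg, abs_one, one_pow]
      rw [habs1, one_mul]
      have hlog1 : |Real.log (aa y (j + 1 + 1))| = Real.log (aa y (j + 2))⁻¹ := by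
        rw [abs_of_nonpos (Real.log_nonpos (le_of_lt hpos) hle1), Real.log_inv]
      rw [hlog1]
      have h2 : Real.log (aa y (j + 2))⁻¹ ≤ (aa y (j + 2))⁻¹ - 1 :=
        Real.log_le_sub_one_of_pos (by positivity)
      have h3 : (aa y (j + 2))⁻¹ - 1 = (1 - aa y (j + 2)) / aa y (j + 2) := by
        field_simp
      have h4 : (1 - aa y (j + 2)) / aa y (j + 2) ≤ (1 - aa y (j + 2)) / c :=
        div_le_div_of_nonneg_left (by linarith) hcpos (hclesaa j)
      have h5 : 1 - aa y (j + 2) = y ^ 2 / (((j : ℝ) + 2) ^ 2 * π ^ 2) := by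
        unfold aa; push_cast; ring
      have h6 : y ^ 2 / (((j : ℝ) + 2) ^ 2 * π ^ 2) / c
          ≤ (y ^ 2 / (c * π ^ 2)) * (1 / (((j : ℝ) + 1) + 1) ^ 2) := by
        rw [div_div, div_mul_eq_mul_div, mul_one_div, div_div]
        apply div_le_div_of_nonneg_left (sq_nonneg y) (by positivity)
        nlinarith [sq_nonneg π, Nat.cast_nonneg (α := ℝ) j, sq_nonneg (j:ℝ)]
      push_cast
      calc Real.log (aa y (j + 2))⁻¹ ≤ (1 - aa y (j + 2)) / aa y (j + 2) := by rw [← h3]; exact h2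
        _ ≤ (1 - aa y (j + 2)) / c := h4
        _ = y ^ 2 / (((j : ℝ) + 2) ^ 2 * π ^ 2) / c := by rw [h5]
        _ ≤ (y ^ 2 / (c * π ^ 2)) * (1 / (((j : ℝ) + 1) + 1) ^ 2) := h6
  have hBsum : Summable (fun k : ℕ => (y ^ 2 / (c * π ^ 2)) * (1 / ((k : ℝ) + 1) ^ 2)) := by
    apply Summable.mul_left
    have h0 : Summable (fun n : ℕ => 1 / (n : ℝ) ^ 2) :=
      Real.summable_one_div_nat_pow.mpr one_lt_two
    have h1 := (summable_nat_add_iff 1).mpr h0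
    refine h1.congr fun n => ?_
    push_cast
    ring
  have hlogsum : Summable fun k => Real.log (g k) :=
    Summable.of_norm_bounded hBsum hlogbound
  have hexp : HasProd g (Real.exp (∑' k, Real.log (g k))) := by
    refine (hlogsum.hasSum.rexp).congr_fun fun k => ?_
    exact (Real.exp_log (hgpos k)).symm
  have hsingle : HasProd (fun k : ℕ => if k = 0 then F 0 else 1) (F 0) := by
    have := hasProd_single (f := fun k : ℕ => if k = 0 then F 0 else 1) 0
      (fun b hb => if_neg hb)
    simpa using this
  have hFprod : HasProd F (F 0 * Real.exp (∑' k, Real.log (g k))) := by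
    refine (hsingle.mul hexp).congr_fun fun k => ?_
    match k with
    | 0 => simp [hg]
    | (j + 1) => rw [if_neg (Nat.succ_ne_zero j), one_mul, hg,
        Function.update_of_ne (Nat.succ_ne_zero j)]
  exact hFprod.multipliable

lemma key_hasProd (y : ℝ) (hy0 : y ≠ 0) (hy : |y| < 2 * π) :
    HasProd (fun k : ℕ => (aa y (k + 1)) ^ ((-1 : ℤ) ^ k)) ((y / 2) * Real.cot (y / 2)) := by
  obtain ⟨L, hL⟩ := multipliable_F y hy
  have := tendsto_nhds_unique hL.tendsto_prod_nat (tendsto_P y hy0 hy)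
  rwa [this] at hL

/-- Key lemma in Pólya–Szegő Exercise 68: for `0 < |x| < 2π` and `m ≥ 1`, the
alternating-exponent product `∏_k (1 - x²/((km)²π²))^{(-1)^{k-1}}` converges to
`(x/(2m)) cot(x/(2m))`. -/
theorem alternating_sine_product (x : ℝ) (hx0 : 0 < |x|) (hx : |x| < 2 * π)
    (m : ℕ) (hm : 1 ≤ m) :
    Multipliable (fun k : ℕ =>
        (1 - x ^ 2 / ((((k : ℝ) + 1) * m) ^ 2 * π ^ 2)) ^ ((-1 : ℤ) ^ k)) ∧
    ∏' k : ℕ, (1 - x ^ 2 / ((((k : ℝ) + 1) * m) ^ 2 * π ^ 2)) ^ ((-1 : ℤ) ^ k)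
      = (x / (2 * m)) * Real.cot (x / (2 * m)) := by

  have hm0 : (0 : ℝ) < (m : ℝ) := by exact_mod_cast Nat.lt_of_lt_of_le Nat.zero_lt_one hm
  have hm1 : (1 : ℝ) ≤ (m : ℝ) := by exact_mod_cast hm
  have hx0' : x ≠ 0 := abs_pos.mp hx0
  set y : ℝ := x / m with hy_def
  have hy0 : y ≠ 0 := div_ne_zero hx0' (ne_of_gt hm0)
  have hy : |y| < 2 * π := by
    rw [hy_def, abs_div, abs_of_pos hm0]
    calc |x| / (m : ℝ) ≤ |x| := div_le_self (abs_nonneg x) hm1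
      _ < 2 * π := hx
  have hkey := key_hasProd y hy0 hy
  have hπ : (π : ℝ) ≠ 0 := pi_ne_zero
  have hfun : (fun k : ℕ =>
      (1 - x ^ 2 / ((((k : ℝ) + 1) * m) ^ 2 * π ^ 2)) ^ ((-1 : ℤ) ^ k))
      = fun k : ℕ => (aa y (k + 1)) ^ ((-1 : ℤ) ^ k) := by
    funext k
    congr 1
    unfold aa
    rw [hy_def]
    push_cast
    have hne : ((m : ℝ)) ≠ 0 := ne_of_gt hm0
    field_simp
  have harg : x / (2 * m) = y / 2 := by
    rw [hy_def]
    field_simp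
  rw [hfun, harg]
  exact ⟨hkey.multipliable, hkey.tprod_eq⟩
end

section
/- For all real x ≠ 0, 1/(e^x - 1) = 1/x - 1/2 + 2x ∑_{n=1}^∞ 1/(x² + 4n²π²), where the series converges absolutely. -/
open Real

noncomputable section CothAux

open Complex MeasureTheory Set intervalIntegral

instance coth_pf_fact : Fact ((0:ℝ) < 1) := ⟨one_pos⟩

set_option maxHeartbeats 1000000

lemma coth_pf_denom_ne (x : ℝ) (hx : x ≠ 0) (n : ℤ) : (x : ℂ) - 2 * π * Complex.I * n ≠ 0 := by
  intro h
  have h2 := congrArg Complex.re h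
  simp [Complex.mul_re, Complex.mul_im] at h2
  exact hx h2

lemma coth_pf_coeff (x : ℝ) (hx : x ≠ 0) (n : ℤ) :
    fourierCoeff (AddCircle.liftIoc 1 0 (fun t : ℝ => Complex.exp (x * t))) n
      = (Complex.exp x - 1) / ((x : ℂ) - 2 * π * Complex.I * n) := by
  rw [fourierCoeff_eq_intervalIntegral _ n 0]
  have h1 : ∫ t in (0:ℝ)..0+1, (fourier (-n) (t : AddCircle (1:ℝ)) : ℂ) •
      AddCircle.liftIoc (1:ℝ) 0 (fun t : ℝ => Complex.exp (x * t)) t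
      = ∫ t in (0:ℝ)..0+1, Complex.exp (((x : ℂ) - 2 * π * Complex.I * n) * t) := by
    rw [intervalIntegral.integral_of_le (by norm_num : (0:ℝ) ≤ 0+1),
      intervalIntegral.integral_of_le (by norm_num : (0:ℝ) ≤ 0+1)]
    refine setIntegral_congr_fun measurableSet_Ioc fun t ht => ?_
    rw [AddCircle.liftIoc_coe_apply ht, fourier_coe_apply, smul_eq_mul, ← Complex.exp_add]
    congr 1
    push_cast
    ring
  rw [h1, integral_exp_mul_complex (coth_pf_denom_ne x hx n)]
  have h2 : Complex.exp (((x : ℂ) - 2 * π * Complex.I * n) * (0+1 : ℝ)) = Complex.exp x := by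
    push_cast
    rw [show (((x:ℂ) - 2 * π * Complex.I * n) * (0+1)) = (x:ℂ) - (n:ℂ) * (2*π*Complex.I) by ring,
      Complex.exp_sub, Complex.exp_int_mul_two_pi_mul_I, div_one]
  rw [h2]
  norm_num

lemma coth_pf_norm_coeff (x : ℝ) (n : ℤ) :
    ‖(Complex.exp x - 1) / ((x : ℂ) - 2 * π * Complex.I * n)‖ ^ 2
      = (Real.exp x - 1) ^ 2 * (1 / (x ^ 2 + 4 * π ^ 2 * (n : ℝ) ^ 2)) := by
  rw [norm_div, div_pow, mul_one_div]
  congr 1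
  · rw [← Complex.ofReal_exp, ← Complex.ofReal_one, ← Complex.ofReal_sub,
      Complex.norm_real, Real.norm_eq_abs, _root_.sq_abs]
  · rw [Complex.sq_norm, Complex.normSq_apply]
    simp [Complex.mul_re, Complex.mul_im]
    ring

lemma coth_pf_measurable (x : ℝ) :
    Measurable (AddCircle.liftIoc (1:ℝ) 0 (fun t : ℝ => Complex.exp (x * t))) := by
  rw [AddCircle.liftIoc]
  have h1 : Measurable ((Ioc (0:ℝ) (0+1)).restrict (fun t : ℝ => Complex.exp (x * t))) := by
    exact (Continuous.measurable (by fun_prop : Continuous fun t : ℝ => Complex.exp (x * t))).comp measurable_subtype_coe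
  exact h1.comp (AddCircle.measurableEquivIoc (1:ℝ) 0).measurable

lemma coth_pf_memLp (x : ℝ) :
    MemLp (AddCircle.liftIoc (1:ℝ) 0 (fun t : ℝ => Complex.exp (x * t))) 2
      (AddCircle.haarAddCircle) := by
  refine MemLp.mono_exponent (q := ⊤)
    (memLp_top_of_bound (coth_pf_measurable x).aestronglyMeasurable (Real.exp |x|)
    (ae_of_all _ fun z => ?_)) le_top
  have hz : AddCircle.liftIoc (1:ℝ) 0 (fun t : ℝ => Complex.exp (x * t)) z
      = Complex.exp (x * ((AddCircle.equivIoc (1:ℝ) 0 z : ℝ))) := rfl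
  rw [hz, Complex.norm_exp]
  have ht := (AddCircle.equivIoc (1:ℝ) 0 z).2
  set t : ℝ := ((AddCircle.equivIoc (1:ℝ) 0 z : ℝ))
  simp only [zero_add, Set.mem_Ioc] at ht
  apply Real.exp_le_exp.2
  calc ((x:ℂ) * t).re = x * t := by
        rw [show ((x:ℂ) * t) = ((x * t : ℝ) : ℂ) by push_cast; ring, Complex.ofReal_re]
    _ ≤ |x * t| := le_abs_self _
    _ = |x| * |t| := abs_mul x t
    _ ≤ |x| * 1 := by
        apply mul_le_mul_of_nonneg_left _ (abs_nonneg x)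
        rw [abs_le]; constructor <;> nlinarith [ht.1, ht.2]
    _ = |x| := mul_one _

lemma coth_pf_exp_integral {c : ℝ} (hc : c ≠ 0) :
    ∫ t in (0:ℝ)..1, Real.exp (c * t) = (Real.exp c - 1) / c := by
  have D : ∀ t : ℝ, HasDerivAt (fun y : ℝ => Real.exp (c * y) / c) (Real.exp (c * t)) t := by
    intro t
    have h1 : HasDerivAt (fun y : ℝ => c * y) c t := by
      simpa using (hasDerivAt_id t).const_mul c
    have := ((Real.hasDerivAt_exp (c * t)).comp t h1).div_const c
    simpa [mul_div_assoc, div_self hc] using this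
  rw [intervalIntegral.integral_eq_sub_of_hasDerivAt (fun t _ => D t)
    ((Real.continuous_exp.comp (continuous_const.mul continuous_id)).intervalIntegrable 0 1)]
  rw [mul_one, mul_zero, Real.exp_zero]
  ring

lemma coth_pf_rhs (x : ℝ) (hx : x ≠ 0) :
    ∫ z : AddCircle (1:ℝ), ‖AddCircle.liftIoc (1:ℝ) 0 (fun t : ℝ => Complex.exp (x * t)) z‖ ^ 2
      ∂(AddCircle.haarAddCircle) = (Real.exp (2 * x) - 1) / (2 * x) := by
  have hμ : (AddCircle.haarAddCircle : Measure (AddCircle (1:ℝ))) = volume := by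
    rw [AddCircle.volume_eq_smul_haarAddCircle]
    simp
  rw [hμ, ← AddCircle.intervalIntegral_preimage (1:ℝ) 0]
  have h1 : ∫ t in (0:ℝ)..0+1,
      ‖AddCircle.liftIoc (1:ℝ) 0 (fun t : ℝ => Complex.exp (x * t)) t‖ ^ 2
      = ∫ t in (0:ℝ)..0+1, Real.exp (2 * x * t) := by
    rw [intervalIntegral.integral_of_le (by norm_num : (0:ℝ) ≤ 0+1),
      intervalIntegral.integral_of_le (by norm_num : (0:ℝ) ≤ 0+1)]
    refine setIntegral_congr_fun measurableSet_Ioc fun t ht => ?_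
    rw [AddCircle.liftIoc_coe_apply ht, Complex.norm_exp]
    rw [show ((x:ℂ) * t) = ((x * t : ℝ) : ℂ) by push_cast; ring, Complex.ofReal_re,
      sq, ← Real.exp_add]
    congr 1; ring
  rw [h1, zero_add, coth_pf_exp_integral (by simpa using hx : 2 * x ≠ 0)]

lemma coth_pf_parseval (x : ℝ) (hx : x ≠ 0) :
    (Real.exp x - 1) ^ 2 * (∑' n : ℤ, 1 / (x ^ 2 + 4 * π ^ 2 * (n : ℝ) ^ 2))
      = (Real.exp (2 * x) - 1) / (2 * x) := by
  have hF := coth_pf_memLp x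
  have hcoe := hF.coeFn_toLp
  have h2 := tsum_sq_fourierCoeff (hF.toLp _)
  have h1 : ∀ n : ℤ, fourierCoeff ((hF.toLp _ : Lp ℂ 2 (AddCircle.haarAddCircle)) :
      AddCircle (1:ℝ) → ℂ) n
      = fourierCoeff (AddCircle.liftIoc (1:ℝ) 0 (fun t : ℝ => Complex.exp (x * t))) n := by
    intro n
    rw [fourierCoeff, fourierCoeff]
    exact integral_congr_ae (hcoe.mono fun t ht => by simp only [ht])
  have h3 : ∫ t : AddCircle (1:ℝ), ‖(hF.toLp _ : Lp ℂ 2 (AddCircle.haarAddCircle)) t‖ ^ 2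
      ∂(AddCircle.haarAddCircle) = (Real.exp (2 * x) - 1) / (2 * x) := by
    rw [← coth_pf_rhs x hx]
    exact integral_congr_ae (hcoe.mono fun t ht => by simp only [ht])
  rw [h3] at h2
  have h4 : ∀ n : ℤ, ‖fourierCoeff ((hF.toLp _ : Lp ℂ 2 (AddCircle.haarAddCircle)) :
      AddCircle (1:ℝ) → ℂ) n‖ ^ 2
      = (Real.exp x - 1) ^ 2 * (1 / (x ^ 2 + 4 * π ^ 2 * (n : ℝ) ^ 2)) := by
    intro n
    rw [h1 n, coth_pf_coeff x hx n, coth_pf_norm_coeff x n]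
  simp_rw [h4] at h2
  rwa [tsum_mul_left] at h2

lemma coth_pf_summable_u (x : ℝ) :
    Summable (fun n : ℕ => 1 / (x ^ 2 + 4 * ((n : ℝ) + 1) ^ 2 * π ^ 2)) := by
  have hcomp : Summable (fun n : ℕ => 1 / ((n : ℝ) + 1) ^ 2) := by
    have h := (Real.summable_one_div_nat_pow (p := 2)).mpr one_lt_two
    have := (summable_nat_add_iff (f := fun n : ℕ => 1 / (n : ℝ) ^ 2) 1).mpr h
    refine this.congr fun n => ?_
    push_cast
    ring
  refine Summable.of_nonneg_of_le (fun n => by positivity) (fun n => ?_) hcomp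
  refine one_div_le_one_div_of_le (by positivity) ?_
  have hπ : (9:ℝ) ≤ π ^ 2 := by nlinarith [Real.pi_gt_three]
  nlinarith [sq_nonneg x, mul_le_mul_of_nonneg_left hπ (sq_nonneg ((n : ℝ) + 1))]

lemma coth_pf_split (x : ℝ) (hx : x ≠ 0) :
    ∑' n : ℤ, 1 / (x ^ 2 + 4 * π ^ 2 * (n : ℝ) ^ 2)
      = 1 / x ^ 2 + 2 * ∑' n : ℕ, 1 / (x ^ 2 + 4 * ((n : ℝ) + 1) ^ 2 * π ^ 2) := by
  set fZ : ℤ → ℝ := fun n => 1 / (x ^ 2 + 4 * π ^ 2 * (n : ℝ) ^ 2) with hfZ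
  have hu := coth_pf_summable_u x
  set S := ∑' n : ℕ, 1 / (x ^ 2 + 4 * ((n : ℝ) + 1) ^ 2 * π ^ 2) with hS
  have e1 : (fun n : ℕ => fZ ((n : ℤ) + 1))
      = (fun n : ℕ => 1 / (x ^ 2 + 4 * ((n : ℝ) + 1) ^ 2 * π ^ 2)) := by
    funext n
    simp only [hfZ]
    push_cast
    ring
  have h1a : HasSum (fun n : ℕ => fZ ((n : ℤ) + 1)) S := by
    rw [e1]; exact hu.hasSum
  have h1 : HasSum (fun n : ℕ => fZ (n : ℤ)) (S + fZ 0) := by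
    have e3 : (fun n : ℕ => fZ (((n + 1 : ℕ) : ℤ))) = (fun n : ℕ => fZ ((n : ℤ) + 1)) := by
      funext n
      norm_cast
    have h := (hasSum_nat_add_iff (f := fun n : ℕ => fZ (n : ℤ)) 1).mp (by rw [e3]; exact h1a)
    simpa using h
  have h2 : HasSum (fun n : ℕ => fZ (-((n : ℤ) + 1))) S := by
    have e2 : (fun n : ℕ => fZ (-((n : ℤ) + 1)))
        = (fun n : ℕ => 1 / (x ^ 2 + 4 * ((n : ℝ) + 1) ^ 2 * π ^ 2)) := by
      funext n
      simp only [hfZ]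
      push_cast
      ring
    rw [e2]; exact hu.hasSum
  have htot := h1.of_nat_of_neg_add_one h2
  rw [htot.tsum_eq]
  have h0 : fZ 0 = 1 / x ^ 2 := by simp [hfZ]
  rw [h0]
  ring

end CothAux

/-- Partial fraction expansion of `1/(e^x - 1)`:
`1/(e^x-1) = 1/x - 1/2 + 2x ∑_{n≥1} 1/(x²+4n²π²)`, with absolute convergence. -/
theorem coth_partial_fractions (x : ℝ) (hx : x ≠ 0) :
    Summable (fun n : ℕ => |1 / (x ^ 2 + 4 * ((n : ℝ) + 1) ^ 2 * π ^ 2)|) ∧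
    1 / (Real.exp x - 1)
      = 1 / x - 1 / 2 + 2 * x * ∑' n : ℕ, 1 / (x ^ 2 + 4 * ((n : ℝ) + 1) ^ 2 * π ^ 2) := by
  constructor
  · exact (coth_pf_summable_u x).abs
  · have hpar := coth_pf_parseval x hx
    rw [coth_pf_split x hx] at hpar
    set S := ∑' n : ℕ, 1 / (x ^ 2 + 4 * ((n : ℝ) + 1) ^ 2 * π ^ 2) with hSdef
    set E := Real.exp x with hEdef
    have hE : E - 1 ≠ 0 := sub_ne_zero.2 fun h => hx (Real.exp_injective (h.trans Real.exp_zero.symm))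
    have h2x : Real.exp (2 * x) = E * E := by rw [two_mul, Real.exp_add]
    rw [h2x] at hpar
    have hb : (E - 1) ^ 2 * ((E + 1) / (2 * x * (E - 1))) = (E * E - 1) / (2 * x) := by
      field_simp
      ring
    have ha : 1 / x ^ 2 + 2 * S = (E + 1) / (2 * x * (E - 1)) :=
      mul_left_cancel₀ (pow_ne_zero 2 hE) (hpar.trans hb.symm)
    have hc : 2 * x * S = x * (1 / x ^ 2 + 2 * S) - 1 / x := by
      field_simp
      ring
    rw [hc, ha]
    field_simp
    ring
end

section
/- For real x > 0, the function f(x) = 1/(e^x - 1) - 1/x + 1/2 satisfies 0 < f(x) < min(1/2, x/12) — in particular f(x) = O(x) as x → 0⁺ and f(x) → 1/2 as x → ∞, so the integral ∫_0^∞ f(x) x^{s-1} dx converges for -1 < Re(s) < 0. -/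
open Real

lemma aux_exp_lower {x : ℝ} (hx : 0 ≤ x) :
    1 + x + x^2/2 + x^3/6 + x^4/24 + x^5/120 ≤ Real.exp x := by
  have h := Real.sum_le_exp_of_nonneg hx 6
  simpa [Finset.sum_range_succ, Nat.factorial] using h

lemma aux_hpos {x : ℝ} (hx : 0 < x) :
    x^2 + 6*x + 12 < Real.exp x * (x^2 - 6*x + 12) := by
  have h := aux_exp_lower hx.le
  have hq : 0 < x^2 - 6*x + 12 := by nlinarith [sq_nonneg (x - 3)]
  nlinarith [pow_pos hx 5, mul_pos (pow_pos hx 5)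
    (by nlinarith [sq_nonneg (2*x-1)] : (0:ℝ) < x^2 - x + 2)]

lemma aux_sinh_lt_mul_cosh {t : ℝ} (ht : 0 < t) : Real.sinh t < t * Real.cosh t := by
  have h : StrictMonoOn (fun t => t * Real.cosh t - Real.sinh t) (Set.Ici 0) := by
    refine strictMonoOn_of_deriv_pos (convex_Ici _)
      (by fun_prop) (fun x hx => ?_)
    rw [interior_Ici, Set.mem_Ioi] at hx
    have : HasDerivAt (fun t => t * Real.cosh t - Real.sinh t) (x * Real.sinh x) x := by
      have := ((hasDerivAt_id x).mul (Real.hasDerivAt_cosh x)).sub (Real.hasDerivAt_sinh x)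
      exact this.congr_deriv (by simp)
    rw [this.deriv]
    exact mul_pos hx (Real.sinh_pos_iff.2 hx)
  have := h (Set.self_mem_Ici) (Set.mem_Ici.2 ht.le) ht
  simp at this
  linarith

lemma aux_key_pos {x : ℝ} (hx : 0 < x) :
    2 * (Real.exp x - 1) < x * (Real.exp x + 1) := by
  have ht : 0 < x / 2 := by linarith
  have h := aux_sinh_lt_mul_cosh ht
  rw [Real.sinh_eq, Real.cosh_eq] at h
  have e1 : Real.exp (x/2) * Real.exp (x/2) = Real.exp x := by
    rw [← Real.exp_add]; ring_nf
  have e2 : Real.exp (-(x/2)) * Real.exp (x/2) = 1 := by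
    rw [← Real.exp_add]; simp
  nlinarith [Real.exp_pos (-(x/2)), Real.exp_pos (x/2)]

lemma aux_part1 {x : ℝ} (hx : 0 < x) :
      0 < 1 / (Real.exp x - 1) - 1 / x + 1 / 2 ∧
      1 / (Real.exp x - 1) - 1 / x + 1 / 2 < min (1 / 2) (x / 12) := by
  have hlt : x < Real.exp x - 1 := by
    have := Real.add_one_lt_exp (ne_of_gt hx); linarith
  have hE : 0 < Real.exp x - 1 := by linarith
  constructor
  · have heq : 1 / (Real.exp x - 1) - 1 / x + 1 / 2
        = (x * (Real.exp x + 1) - 2 * (Real.exp x - 1)) / (2 * x * (Real.exp x - 1)) := by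
      field_simp
      ring
    rw [heq]
    exact div_pos (by linarith [aux_key_pos hx]) (by positivity)
  · refine lt_min ?_ ?_
    · have h1 : 1 / (Real.exp x - 1) < 1 / x := one_div_lt_one_div_of_lt hx hlt
      linarith
    · have heq : x / 12 - (1 / (Real.exp x - 1) - 1 / x + 1 / 2)
          = (Real.exp x * (x^2 - 6*x + 12) - (x^2 + 6*x + 12)) / (12 * x * (Real.exp x - 1)) := by
        field_simp
        ring
      have := aux_hpos hx
      linarith [div_pos
        (by linarith : 0 < Real.exp x * (x^2 - 6*x + 12) - (x^2 + 6*x + 12))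
        (by positivity : (0:ℝ) < 12 * x * (Real.exp x - 1)), heq]

open MeasureTheory in
lemma aux_part2 {s : ℂ} (h1 : -1 < s.re) (h2 : s.re < 0) :
    MeasureTheory.IntegrableOn
        (fun x : ℝ => ((1 / (Real.exp x - 1) - 1 / x + 1 / 2 : ℝ) : ℂ) * (x : ℂ) ^ (s - 1))
        (Set.Ioi (0 : ℝ)) := by
  set F := fun x : ℝ => ((1 / (Real.exp x - 1) - 1 / x + 1 / 2 : ℝ) : ℂ) * (x : ℂ) ^ (s - 1) with hF
  have hcont : ContinuousOn F (Set.Ioi (0:ℝ)) := by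
    apply ContinuousOn.mul
    · apply Complex.continuous_ofReal.comp_continuousOn
      apply ContinuousOn.add
      apply ContinuousOn.sub
      · exact continuousOn_const.div (by fun_prop) (fun x hx => by
          have : x < Real.exp x - 1 := by
            have := Real.add_one_lt_exp (ne_of_gt (Set.mem_Ioi.1 hx)); linarith
          have := Set.mem_Ioi.1 hx; intro hc; linarith [hc ▸ this])
      · exact continuousOn_const.div continuousOn_id (fun x hx => ne_of_gt (Set.mem_Ioi.1 hx))
      · exact continuousOn_const
    · intro x hx
      have hx0 : (0:ℝ) < x := Set.mem_Ioi.1 hx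
      apply ContinuousAt.continuousWithinAt
      exact (continuousAt_cpow_const (Complex.mem_slitPlane_iff.2 (Or.inl (by simpa using hx0)))).comp
        Complex.continuous_ofReal.continuousAt
  have hmeas : ∀ t ⊆ Set.Ioi (0:ℝ), MeasurableSet t → AEStronglyMeasurable F (volume.restrict t) :=
    fun t ht hmt => (hcont.mono ht).aestronglyMeasurable hmt
  have hnorm : ∀ x : ℝ, 0 < x → ‖F x‖ =
      |1 / (Real.exp x - 1) - 1 / x + 1 / 2| * x ^ (s.re - 1) := by
    intro x hx
    rw [hF]
    simp only [norm_mul, Complex.norm_real, Real.norm_eq_abs,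
      Complex.norm_cpow_eq_rpow_re_of_pos hx, Complex.sub_re, Complex.one_re]
  have habs : ∀ x : ℝ, 0 < x →
      |1 / (Real.exp x - 1) - 1 / x + 1 / 2| ≤ min (1/2) (x/12) := by
    intro x hx
    obtain ⟨hp, hb⟩ := aux_part1 hx
    rw [abs_of_pos hp]; exact hb.le
  rw [← Set.Ioc_union_Ioi_eq_Ioi (le_of_lt one_pos), integrableOn_union]
  constructor
  · have hint : IntegrableOn (fun x : ℝ => x ^ s.re / 12) (Set.Ioc 0 1) := by
      have : IntegrableOn (fun x : ℝ => x ^ s.re) (Set.Ioc 0 1) := by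
        rw [← intervalIntegrable_iff_integrableOn_Ioc_of_le (by norm_num : (0:ℝ) ≤ 1)]
        exact intervalIntegral.intervalIntegrable_rpow' h1
      exact this.div_const 12
    refine hint.mono' (hmeas _ Set.Ioc_subset_Ioi_self measurableSet_Ioc) ?_
    filter_upwards [ae_restrict_mem measurableSet_Ioc] with x hx
    have hx0 : (0:ℝ) < x := hx.1
    rw [hnorm x hx0]
    calc |1 / (Real.exp x - 1) - 1 / x + 1 / 2| * x ^ (s.re - 1)
        ≤ (x/12) * x ^ (s.re - 1) := by
          apply mul_le_mul_of_nonneg_right (le_trans (habs x hx0) (min_le_right _ _))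
            (Real.rpow_nonneg hx0.le _)
      _ = x ^ s.re / 12 := by
          rw [div_mul_eq_mul_div,
            ← Real.rpow_one_add' (by positivity) (by intro hc; exact h2.ne (by linarith))]
          ring_nf
  · have hint : IntegrableOn (fun x : ℝ => x ^ (s.re - 1) / 2) (Set.Ioi 1) := by
      have := integrableOn_Ioi_rpow_of_lt (by linarith : s.re - 1 < -1) one_pos
      exact this.div_const 2
    refine hint.mono' (hmeas _ (fun x hx => Set.mem_Ioi.2 (lt_trans one_pos hx)) measurableSet_Ioi) ?_
    filter_upwards [ae_restrict_mem measurableSet_Ioi] with x hx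
    have hx0 : (0:ℝ) < x := lt_trans one_pos hx
    rw [hnorm x hx0]
    calc |1 / (Real.exp x - 1) - 1 / x + 1 / 2| * x ^ (s.re - 1)
        ≤ (1/2) * x ^ (s.re - 1) := by
          apply mul_le_mul_of_nonneg_right (le_trans (habs x hx0) (min_le_left _ _))
            (Real.rpow_nonneg hx0.le _)
      _ = x ^ (s.re - 1) / 2 := by ring

/-- Convergence lemma: `f x = 1/(e^x-1) - 1/x + 1/2` satisfies
`0 < f x < min (1/2) (x/12)` for `x > 0`, and consequently
`∫_0^∞ f(x) x^{s-1} dx` converges for `-1 < Re s < 0`. -/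
theorem convergence_lemma :
    (∀ x : ℝ, 0 < x →
      0 < 1 / (Real.exp x - 1) - 1 / x + 1 / 2 ∧
      1 / (Real.exp x - 1) - 1 / x + 1 / 2 < min (1 / 2) (x / 12)) ∧
    (∀ s : ℂ, -1 < s.re → s.re < 0 →
      MeasureTheory.IntegrableOn
        (fun x : ℝ => ((1 / (Real.exp x - 1) - 1 / x + 1 / 2 : ℝ) : ℂ) * (x : ℂ) ^ (s - 1))
        (Set.Ioi (0 : ℝ))) := by
  exact ⟨fun x hx => aux_part1 hx, fun s h1 h2 => aux_part2 h1 h2⟩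
end
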